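/- Let n ≥ 2 and let p, a_1, a_2, t be nonzero complex numbers with |p| < 1, generic so that all theta denominators appearing in the fundamental invariants are nonzero. For 0 ≤ r ≤ n and z = (z_1, …, z_n) ∈ (ℂ*)^n, writing z' = (z_1, …, z_{n−1}), the fundamental invariants satisfy the recurrence E_r^{(n)}(a_1, a_2; z) = E_{r−1}^{(n−1)}(a_1, a_2; z') · θ(a_2 t^{n−r} z_n^{±1}; p)/θ(a_2 t^{n−r} (a_1 t^{r−1})^{±1}; p) + E_r^{(n−1)}(a_1, a_2; z') · θ(a_1 t^r z_n^{±1}; p)/θ(a_1 t^r (a_2 t^{n−r−1})^{±1}; p), with the conventions E_{−1}^{(n−1)} = 0 and E_n^{(n−1)} = 0. -/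

import Mathlib

open Finset

/-- The theta function `θ(z;p) = ∏_{i≥0} (1 - p^i z)(1 - p^{i+1}/z)`. -/
noncomputable def theta (p z : ℂ) : ℂ :=
  ∏' i : ℕ, ((1 - p ^ i * z) * (1 - p ^ (i + 1) * z⁻¹))

/-- The theta shifted factorial `θ(z;p;q)_k = ∏_{j=0}^{k-1} θ(q^j z;p)`. -/
noncomputable def thetaPoch (p q z : ℂ) (k : ℕ) : ℂ :=
  ∏ j ∈ Finset.range k, theta p (q ^ j * z)

/-- `θ(x u^{±1};p) = θ(xu;p) θ(x/u;p)`. -/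
noncomputable def thetaPm (p x u : ℂ) : ℂ :=
  theta p (x * u) * theta p (x * u⁻¹)

/-- The fundamental `BC_n` invariant `E_r(a₁,a₂;z)`, as a sum over the subsets
`S = {i_1 < … < i_r}` of `{0,…,n-1}` (0-based indexing); for `i ∈ S`,
`(S.filter (· < i)).card` is the (0-based) rank of `i` in `S`. -/
noncomputable def Efun (p t a₁ a₂ : ℂ) {n : ℕ} (r : ℕ) (z : Fin n → ℂ) : ℂ :=
  ∑ S ∈ Finset.powersetCard r (Finset.univ : Finset (Fin n)),
    (∏ i ∈ S,
        thetaPm p (a₂ * t ^ ((i : ℕ) - (S.filter (fun j => j < i)).card)) (z i) /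
          thetaPm p (a₂ * t ^ ((i : ℕ) - (S.filter (fun j => j < i)).card))
            (a₁ * t ^ (S.filter (fun j => j < i)).card)) *
    (∏ i ∈ Sᶜ,
        thetaPm p (a₁ * t ^ ((i : ℕ) - (Sᶜ.filter (fun j => j < i)).card)) (z i) /
          thetaPm p (a₁ * t ^ ((i : ℕ) - (Sᶜ.filter (fun j => j < i)).card))
            (a₂ * t ^ (Sᶜ.filter (fun j => j < i)).card))

/-- Genericity: all theta denominators appearing in the fundamental invariants are nonzero. -/
def eDenomsNZ (p t a₁ a₂ : ℂ) (n : ℕ) : Prop :=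
  ∀ k l : ℕ, k < n → l < n →
    thetaPm p (a₂ * t ^ k) (a₁ * t ^ l) ≠ 0 ∧ thetaPm p (a₁ * t ^ k) (a₂ * t ^ l) ≠ 0

/-- The reference point `ζ^{(s)} = (a₁, a₁t, …, a₁ t^{s-1}, a₂, a₂ t, …, a₂ t^{n-s-1})`. -/
noncomputable def zetaPt (a₁ a₂ t : ℂ) (n s : ℕ) : Fin n → ℂ :=
  fun i => if (i : ℕ) < s then a₁ * t ^ (i : ℕ) else a₂ * t ^ ((i : ℕ) - s)

/-- `F_i^+(z)`. -/
noncomputable def Fplus (p t : ℂ) (a : Fin 6 → ℂ) {n : ℕ} (i : Fin n) (z : Fin n → ℂ) : ℂ :=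
  ((∏ m : Fin 6, theta p (a m * z i)) / ((z i) ^ 2 * theta p ((z i) ^ 2))) *
    ∏ j ∈ Finset.univ.erase i, thetaPm p (t * z i) (z j) / thetaPm p (z i) (z j)

/-- `F_i^-(z) = F_i^+(z_1, …, z_i⁻¹, …, z_n)`. -/
noncomputable def Fminus (p t : ℂ) (a : Fin 6 → ℂ) {n : ℕ} (i : Fin n) (z : Fin n → ℂ) : ℂ :=
  Fplus p t a i (Function.update z i (z i)⁻¹)

/-- None of the theta denominators of `F_i^+` vanishes at `z`. -/
def FplusDenomNZ (p : ℂ) {n : ℕ} (i : Fin n) (z : Fin n → ℂ) : Prop :=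
  theta p ((z i) ^ 2) ≠ 0 ∧ ∀ j, j ≠ i → thetaPm p (z i) (z j) ≠ 0

/-- None of the theta denominators of `F_i^-` vanishes at `z`. -/
def FminusDenomNZ (p : ℂ) {n : ℕ} (i : Fin n) (z : Fin n → ℂ) : Prop :=
  FplusDenomNZ p i (Function.update z i (z i)⁻¹)

/-- `h_r(z) = Σ_i (F_i^-(z) + F_i^+(z)) E_{r-1}^{(n-1)}(z_1,…,ẑ_i,…,z_n)`, in `n+1` variables. -/
noncomputable def hFun (p t : ℂ) (a : Fin 6 → ℂ) (n r : ℕ) (z : Fin (n + 1) → ℂ) : ℂ :=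
  ∑ i : Fin (n + 1),
    (Fminus p t a i z + Fplus p t a i z) *
      Efun p t (a 0) (a 1) (r - 1) (fun j : Fin n => z (i.succAbove j))

/-- The base point `ξ = (a₁, a₁ t, …, a₁ t^{n-1})`. -/
noncomputable def xiPt (a₁ t : ℂ) (n : ℕ) : Fin n → ℂ := fun i => a₁ * t ^ (i : ℕ)

/-- The weight `W(ν) = Φ(q^ν ξ)/Φ(ξ)` of the truncated Jackson integral. -/
noncomputable def weight (p q t : ℂ) (a : Fin 6 → ℂ) (n : ℕ) (ν : Fin n → ℕ) : ℂ :=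
  (∏ i : Fin n,
      (q ^ 2 * (a 0 * a 1 * a 2 * a 3 * a 4 * a 5 * t ^ (2 * n - 2))⁻¹ *
            t ^ (2 * (n - 1 - (i : ℕ)))) ^ ν i *
        theta p (q ^ (2 * ν i) * xiPt (a 0) t n i ^ 2) / theta p (xiPt (a 0) t n i ^ 2)) *
  (∏ j : Fin n, ∏ k ∈ Finset.Ioi j,
      theta p (q ^ (ν k - ν j) * (xiPt (a 0) t n k / xiPt (a 0) t n j)) *
          theta p (q ^ (ν j + ν k) * (xiPt (a 0) t n j * xiPt (a 0) t n k)) /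
        (theta p (xiPt (a 0) t n k / xiPt (a 0) t n j) *
          theta p (xiPt (a 0) t n j * xiPt (a 0) t n k))) *
  (∏ i : Fin n, ∏ m : Fin 6,
      thetaPoch p q (a m * xiPt (a 0) t n i) (ν i) /
        thetaPoch p q (q * (a m)⁻¹ * xiPt (a 0) t n i) (ν i)) *
  (∏ j : Fin n, ∏ k ∈ Finset.Ioi j,
      thetaPoch p q (t * (xiPt (a 0) t n k / xiPt (a 0) t n j)) (ν k - ν j) *
          thetaPoch p q (t * (xiPt (a 0) t n j * xiPt (a 0) t n k)) (ν j + ν k) /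
        (thetaPoch p q (q * t⁻¹ * (xiPt (a 0) t n k / xiPt (a 0) t n j)) (ν k - ν j) *
          thetaPoch p q (q * t⁻¹ * (xiPt (a 0) t n j * xiPt (a 0) t n k)) (ν j + ν k)))

/-- The truncated Jackson integral `⟨φ⟩ = Σ_{0 ≤ ν₁ ≤ … ≤ ν_n ≤ N} W(ν) φ(q^ν ξ)`. -/
noncomputable def jackson (p q t : ℂ) (a : Fin 6 → ℂ) (n N : ℕ)
    (φ : (Fin n → ℂ) → ℂ) : ℂ :=
  ∑ ν ∈ Finset.univ.filter
      (fun ν : Fin n → Fin (N + 1) => ∀ i j : Fin n, i ≤ j → ν i ≤ ν j),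
    weight p q t a n (fun i => (ν i : ℕ)) *
      φ (fun i => q ^ (ν i : ℕ) * xiPt (a 0) t n i)

/-- Genericity: all theta denominators appearing in the weight `W(ν)`,
for `0 ≤ ν₁ ≤ … ≤ ν_n ≤ N`, are nonzero. -/
def weightDenomsNZ (p q t : ℂ) (a : Fin 6 → ℂ) (n N : ℕ) : Prop :=
  (∀ i : Fin n, theta p (xiPt (a 0) t n i ^ 2) ≠ 0) ∧
  (∀ j k : Fin n, j < k →
      theta p (xiPt (a 0) t n k / xiPt (a 0) t n j) ≠ 0 ∧
        theta p (xiPt (a 0) t n j * xiPt (a 0) t n k) ≠ 0) ∧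
  (∀ (m : Fin 6) (i : Fin n) (k : ℕ), k ≤ N →
      thetaPoch p q (q * (a m)⁻¹ * xiPt (a 0) t n i) k ≠ 0) ∧
  (∀ j k : Fin n, j < k → ∀ l : ℕ, l ≤ 2 * N →
      thetaPoch p q (q * t⁻¹ * (xiPt (a 0) t n k / xiPt (a 0) t n j)) l ≠ 0 ∧
        thetaPoch p q (q * t⁻¹ * (xiPt (a 0) t n j * xiPt (a 0) t n k)) l ≠ 0)
noncomputable def Gfun (p t x y : ℂ) {k : ℕ} (z : Fin k → ℂ) (S : Finset (Fin k)) : ℂ :=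
  ∏ i ∈ S,
    thetaPm p (x * t ^ ((i : ℕ) - (S.filter (fun j => j < i)).card)) (z i) /
      thetaPm p (x * t ^ ((i : ℕ) - (S.filter (fun j => j < i)).card))
        (y * t ^ (S.filter (fun j => j < i)).card)

lemma Efun_eq_sum (p t a₁ a₂ : ℂ) {n : ℕ} (r : ℕ) (z : Fin n → ℂ) :
    Efun p t a₁ a₂ r z =
      ∑ S ∈ Finset.powersetCard r (Finset.univ : Finset (Fin n)),
        Gfun p t a₂ a₁ z S * Gfun p t a₁ a₂ z Sᶜ := rfl

lemma castSuccEmb_lt_last {m : ℕ} (i : Fin m) : Fin.castSuccEmb i < Fin.last m := by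
  simp [Fin.lt_def, Fin.last, Fin.castSuccEmb, Fin.castLE]

lemma not_last_lt {m : ℕ} (i : Fin m) : ¬ (Fin.last m < Fin.castSuccEmb i) := by
  simp [Fin.lt_def, Fin.last, Fin.castSuccEmb, Fin.castLE]

lemma last_not_mem_map {m : ℕ} (S : Finset (Fin m)) : Fin.last m ∉ S.map Fin.castSuccEmb := by
  simp only [Finset.mem_map]
  rintro ⟨u, _, hue⟩
  exact absurd (hue ▸ castSuccEmb_lt_last u) (lt_irrefl _)

lemma rank_map {m : ℕ} (S : Finset (Fin m)) (i : Fin m) :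
    ((S.map Fin.castSuccEmb).filter (fun j => j < Fin.castSuccEmb i)).card
      = (S.filter (fun j => j < i)).card := by
  rw [Finset.filter_map, Finset.card_map]
  rfl

lemma compl_map {m : ℕ} (S : Finset (Fin m)) :
    (S.map Fin.castSuccEmb)ᶜ = insert (Fin.last m) (Sᶜ.map Fin.castSuccEmb) := by
  ext x
  simp only [Finset.mem_compl, Finset.mem_insert, Finset.mem_map]
  rcases Fin.eq_castSucc_or_eq_last x with ⟨y, rfl⟩ | rfl
  · have hy : Fin.castSucc y = Fin.castSuccEmb y := rfl
    rw [hy]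
    constructor
    · intro h
      refine Or.inr ⟨y, fun hy' => h ⟨y, hy', rfl⟩, rfl⟩
    · rintro (h | ⟨w, hw, hwe⟩) ⟨u, hu, hue⟩
      · exact absurd (h ▸ castSuccEmb_lt_last y) (lt_irrefl _)
      · have h1 : u = y := Fin.castSuccEmb.injective hue
        have h2 : w = y := Fin.castSuccEmb.injective hwe
        subst h1; subst h2
        exact hw hu
  · constructor
    · intro _; exact Or.inl rfl
    · rintro _ ⟨u, _, hue⟩
      exact absurd (hue ▸ castSuccEmb_lt_last u) (lt_irrefl _)

lemma compl_insert_last {m : ℕ} (S : Finset (Fin m)) :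
    (insert (Fin.last m) (S.map Fin.castSuccEmb))ᶜ = Sᶜ.map Fin.castSuccEmb := by
  rw [Finset.compl_insert, compl_map, Finset.erase_insert (last_not_mem_map _)]

lemma filter_lt_last {m : ℕ} (W : Finset (Fin m)) :
    ((insert (Fin.last m) (W.map Fin.castSuccEmb)).filter (fun j => j < Fin.last m))
      = W.map Fin.castSuccEmb := by
  rw [Finset.filter_insert, if_neg (lt_irrefl _)]
  apply Finset.filter_true_of_mem
  intro x hx
  obtain ⟨u, _, rfl⟩ := Finset.mem_map.mp hx
  exact castSuccEmb_lt_last u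

lemma filter_insert_last {m : ℕ} (W : Finset (Fin m)) (i : Fin m) :
    ((insert (Fin.last m) (W.map Fin.castSuccEmb)).filter (fun j => j < Fin.castSuccEmb i))
      = (W.map Fin.castSuccEmb).filter (fun j => j < Fin.castSuccEmb i) := by
  rw [Finset.filter_insert, if_neg (not_last_lt i)]

lemma Gfun_map (p t x y : ℂ) {m : ℕ} (z : Fin (m+1) → ℂ) (S : Finset (Fin m)) :
    Gfun p t x y z (S.map Fin.castSuccEmb)
      = Gfun p t x y (fun j => z (Fin.castSuccEmb j)) S := by
  unfold Gfun
  rw [Finset.prod_map]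
  refine Finset.prod_congr rfl fun i _ => ?_
  rw [rank_map]
  rfl

lemma Gfun_insert (p t x y : ℂ) {m : ℕ} (z : Fin (m+1) → ℂ) (W : Finset (Fin m)) :
    Gfun p t x y z (insert (Fin.last m) (W.map Fin.castSuccEmb)) =
      (thetaPm p (x * t ^ (m - W.card)) (z (Fin.last m)) /
        thetaPm p (x * t ^ (m - W.card)) (y * t ^ W.card)) *
      Gfun p t x y (fun j => z (Fin.castSuccEmb j)) W := by
  unfold Gfun
  rw [Finset.prod_insert (last_not_mem_map W)]
  congr 1
  · rw [filter_lt_last, Finset.card_map]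
    rfl
  · rw [Finset.prod_map]
    refine Finset.prod_congr rfl fun i _ => ?_
    rw [filter_insert_last, rank_map]
    rfl

lemma termB (p t a₁ a₂ : ℂ) {m : ℕ} (z : Fin (m+1) → ℂ) (S : Finset (Fin m)) :
    Gfun p t a₂ a₁ z (S.map Fin.castSuccEmb) * Gfun p t a₁ a₂ z (S.map Fin.castSuccEmb)ᶜ =
      (Gfun p t a₂ a₁ (fun j => z (Fin.castSuccEmb j)) S *
        Gfun p t a₁ a₂ (fun j => z (Fin.castSuccEmb j)) Sᶜ) *
      (thetaPm p (a₁ * t ^ (m - Sᶜ.card)) (z (Fin.last m)) /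
        thetaPm p (a₁ * t ^ (m - Sᶜ.card)) (a₂ * t ^ Sᶜ.card)) := by
  rw [Gfun_map, compl_map, Gfun_insert]
  ring

lemma termA (p t a₁ a₂ : ℂ) {m : ℕ} (z : Fin (m+1) → ℂ) (S : Finset (Fin m)) :
    Gfun p t a₂ a₁ z (insert (Fin.last m) (S.map Fin.castSuccEmb)) *
      Gfun p t a₁ a₂ z (insert (Fin.last m) (S.map Fin.castSuccEmb))ᶜ =
      (Gfun p t a₂ a₁ (fun j => z (Fin.castSuccEmb j)) S *
        Gfun p t a₁ a₂ (fun j => z (Fin.castSuccEmb j)) Sᶜ) *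
      (thetaPm p (a₂ * t ^ (m - S.card)) (z (Fin.last m)) /
        thetaPm p (a₂ * t ^ (m - S.card)) (a₁ * t ^ S.card)) := by
  rw [Gfun_insert, compl_insert_last, Gfun_map]
  ring

lemma univ_succ (m : ℕ) : (univ : Finset (Fin (m+1)))
    = insert (Fin.last m) ((univ : Finset (Fin m)).map Fin.castSuccEmb) := by
  ext x
  simp only [mem_univ, mem_insert, mem_map, true_iff]
  rcases Fin.eq_castSucc_or_eq_last x with ⟨y, rfl⟩ | rfl
  · exact Or.inr ⟨y, by simp, rfl⟩
  · exact Or.inl rfl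

lemma sum_split {M : Type*} [AddCommMonoid M] {m : ℕ} (f : Finset (Fin (m+1)) → M) (r' : ℕ) :
    ∑ S ∈ powersetCard (r'+1) (univ : Finset (Fin (m+1))), f S
      = (∑ S ∈ powersetCard (r'+1) (univ : Finset (Fin m)), f (S.map Fin.castSuccEmb))
        + ∑ S ∈ powersetCard r' (univ : Finset (Fin m)),
            f (insert (Fin.last m) (S.map Fin.castSuccEmb)) := by
  have hdisj : Disjoint
      (powersetCard (r'+1) ((univ : Finset (Fin m)).map Fin.castSuccEmb))
      (image (insert (Fin.last m))
        (powersetCard r' ((univ : Finset (Fin m)).map Fin.castSuccEmb))) := by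
    rw [Finset.disjoint_left]
    intro S hS hS'
    obtain ⟨T, _, rfl⟩ := Finset.mem_image.mp hS'
    have hsub := (Finset.mem_powersetCard.mp hS).1
    exact last_not_mem_map _ (hsub (Finset.mem_insert_self _ _))
  have hinj : ∀ s ∈ powersetCard r' ((univ : Finset (Fin m)).map Fin.castSuccEmb),
      ∀ u ∈ powersetCard r' ((univ : Finset (Fin m)).map Fin.castSuccEmb),
      insert (Fin.last m) s = insert (Fin.last m) u → s = u := by
    intro s hs u hu h
    have hs' : Fin.last m ∉ s := fun hc => last_not_mem_map _ ((Finset.mem_powersetCard.mp hs).1 hc)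
    have hu' : Fin.last m ∉ u := fun hc => last_not_mem_map _ ((Finset.mem_powersetCard.mp hu).1 hc)
    rw [← Finset.erase_insert hs', h, Finset.erase_insert hu']
  rw [univ_succ m, Finset.powersetCard_succ_insert (last_not_mem_map _),
    Finset.sum_union hdisj]
  congr 1
  · rw [Finset.powersetCard_map, Finset.sum_map]
    exact Finset.sum_congr rfl fun S _ => by rfl
  · rw [Finset.sum_image hinj, Finset.powersetCard_map, Finset.sum_map]
    exact Finset.sum_congr rfl fun S _ => by rfl

lemma Efun_key (p t a₁ a₂ : ℂ) {m : ℕ} (r : ℕ) (z : Fin (m+1) → ℂ) :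
    Efun p t a₁ a₂ r z =
      (if r = 0 then 0 else
        Efun p t a₁ a₂ (r-1) (fun j => z (Fin.castSuccEmb j)) *
          (thetaPm p (a₂ * t ^ (m + 1 - r)) (z (Fin.last m)) /
            thetaPm p (a₂ * t ^ (m + 1 - r)) (a₁ * t ^ (r - 1))))
      + (if r ≤ m then
          Efun p t a₁ a₂ r (fun j => z (Fin.castSuccEmb j)) *
            (thetaPm p (a₁ * t ^ r) (z (Fin.last m)) /
              thetaPm p (a₁ * t ^ r) (a₂ * t ^ (m - r)))
         else 0) := by
  match r with
  | 0 =>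
    have h0 : (∅ : Finset (Fin (m+1))) = (∅ : Finset (Fin m)).map Fin.castSuccEmb := rfl
    have hc : ((∅ : Finset (Fin m))ᶜ).card = m := by
      simp [Finset.card_compl]
    rw [if_pos rfl, if_pos (Nat.zero_le m), zero_add, Nat.sub_zero,
      Efun_eq_sum p t a₁ a₂ 0 z, Efun_eq_sum p t a₁ a₂ 0 (fun j => z (Fin.castSuccEmb j)),
      Finset.powersetCard_zero, Finset.sum_singleton, Finset.powersetCard_zero,
      Finset.sum_singleton, h0, termB, hc, Nat.sub_self]
  | Nat.succ r' =>
    have hr0 : r' + 1 ≠ 0 := Nat.succ_ne_zero r'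
    rw [if_neg hr0]
    have hsub : r' + 1 - 1 = r' := rfl
    rw [hsub]
    rw [Efun_eq_sum, sum_split, add_comm]
    congr 1
    · have step : ∀ S ∈ powersetCard r' (univ : Finset (Fin m)),
          Gfun p t a₂ a₁ z (insert (Fin.last m) (S.map Fin.castSuccEmb)) *
            Gfun p t a₁ a₂ z (insert (Fin.last m) (S.map Fin.castSuccEmb))ᶜ
          = (Gfun p t a₂ a₁ (fun j => z (Fin.castSuccEmb j)) S *
              Gfun p t a₁ a₂ (fun j => z (Fin.castSuccEmb j)) Sᶜ) *
            (thetaPm p (a₂ * t ^ (m - r')) (z (Fin.last m)) /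
              thetaPm p (a₂ * t ^ (m - r')) (a₁ * t ^ r')) := by
        intro S hS
        rw [termA, (Finset.mem_powersetCard.mp hS).2]
      rw [Finset.sum_congr rfl step, ← Finset.sum_mul, ← Efun_eq_sum]
      have hmr : m + 1 - (r' + 1) = m - r' := by omega
      rw [hmr]
    · by_cases hle : r' + 1 ≤ m
      · rw [if_pos hle]
        have step : ∀ S ∈ powersetCard (r'+1) (univ : Finset (Fin m)),
            Gfun p t a₂ a₁ z (S.map Fin.castSuccEmb) *
              Gfun p t a₁ a₂ z (S.map Fin.castSuccEmb)ᶜ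
            = (Gfun p t a₂ a₁ (fun j => z (Fin.castSuccEmb j)) S *
                Gfun p t a₁ a₂ (fun j => z (Fin.castSuccEmb j)) Sᶜ) *
              (thetaPm p (a₁ * t ^ (r'+1)) (z (Fin.last m)) /
                thetaPm p (a₁ * t ^ (r'+1)) (a₂ * t ^ (m - (r'+1)))) := by
          intro S hS
          have hcS : S.card = r' + 1 := (Finset.mem_powersetCard.mp hS).2
          have hcc : (Sᶜ).card = m - (r'+1) := by
            rw [Finset.card_compl, hcS]
            simp
          have hmm : m - (Sᶜ).card = r' + 1 := by rw [hcc]; omega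
          rw [termB, hmm, hcc]
        rw [Finset.sum_congr rfl step, ← Finset.sum_mul, ← Efun_eq_sum]
      · rw [if_neg hle]
        have hempty : powersetCard (r'+1) (univ : Finset (Fin m)) = ∅ := by
          rw [Finset.powersetCard_eq_empty]
          simp only [Finset.card_univ, Fintype.card_fin]
          omega
        rw [hempty, Finset.sum_empty]


/-- recurrence for the fundamental invariants,
with the conventions `E_{-1}^{(n-1)} = 0` (the `if r = 0` case) and
`E_n^{(n-1)} = 0` (automatic, since `Efun r = 0` when `r` exceeds the number of variables). -/
theorem Efun_recurrence (n : ℕ) (hn : 2 ≤ n) (r : ℕ) (hr : r ≤ n) (p t a₁ a₂ : ℂ)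
    (hp : ‖p‖ < 1) (hp0 : p ≠ 0) (ht : t ≠ 0) (ha₁ : a₁ ≠ 0) (ha₂ : a₂ ≠ 0)
    (hgen : eDenomsNZ p t a₁ a₂ n) (z : Fin n → ℂ) (hz : ∀ i, z i ≠ 0) :
    Efun p t a₁ a₂ r z =
      (if r = 0 then 0 else
        Efun p t a₁ a₂ (r - 1) (fun j : Fin (n - 1) => z ⟨(j : ℕ), by omega⟩) *
          (thetaPm p (a₂ * t ^ ((n : ℤ) - (r : ℤ))) (z ⟨n - 1, by omega⟩) /
            thetaPm p (a₂ * t ^ ((n : ℤ) - (r : ℤ))) (a₁ * t ^ ((r : ℤ) - 1)))) +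
      Efun p t a₁ a₂ r (fun j : Fin (n - 1) => z ⟨(j : ℕ), by omega⟩) *
        (thetaPm p (a₁ * t ^ (r : ℤ)) (z ⟨n - 1, by omega⟩) /
          thetaPm p (a₁ * t ^ (r : ℤ)) (a₂ * t ^ ((n : ℤ) - (r : ℤ) - 1))) := by
  obtain ⟨m, rfl⟩ : ∃ m, n = m + 1 := ⟨n - 1, by omega⟩
  have e3 : (t : ℂ) ^ (((m + 1 : ℕ) : ℤ) - (r : ℤ)) = t ^ (m + 1 - r) := by
    rw [show (((m + 1 : ℕ) : ℤ) - (r : ℤ)) = ((m + 1 - r : ℕ) : ℤ) by omega, zpow_natCast]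
  rw [Efun_key p t a₁ a₂ r z]
  congr 1
  · split_ifs with h
    · rfl
    · have e4 : (t : ℂ) ^ ((r : ℤ) - 1) = t ^ (r - 1) := by
        rw [show ((r : ℤ) - 1) = ((r - 1 : ℕ) : ℤ) by omega, zpow_natCast]
      rw [e3, e4]
      rfl
  · by_cases hle : r ≤ m
    · have e1 : (t : ℂ) ^ ((r : ℤ)) = t ^ r := zpow_natCast t r
      have e2 : (t : ℂ) ^ (((m + 1 : ℕ) : ℤ) - (r : ℤ) - 1) = t ^ (m - r) := by
        rw [show (((m + 1 : ℕ) : ℤ) - (r : ℤ) - 1) = ((m - r : ℕ) : ℤ) by omega, zpow_natCast]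
      rw [if_pos hle, e1, e2]
      rfl
    · rw [if_neg hle]
      have hE : Efun p t a₁ a₂ r (fun j : Fin (m + 1 - 1) => z ⟨(j : ℕ), by omega⟩) = 0 := by
        rw [Efun_eq_sum]
        have : powersetCard r (univ : Finset (Fin (m + 1 - 1))) = ∅ := by
          rw [Finset.powersetCard_eq_empty]
          simp only [Finset.card_univ, Fintype.card_fin]
          omega
        rw [this, Finset.sum_empty]
      rw [hE, zero_mul]
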